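/- If μ is a partition with μ₁ < k, then e*_k(μ̃₁,…,μ̃_n) = 0, where e*_k is the k-th elementary shifted symmetric polynomial and μ̃ is the conjugate of μ padded with zeros to n ≥ k entries. -/
import Mathlib


open scoped Classical

/-- The `k`-th elementary shifted symmetric polynomial. -/
noncomputable def estar (n k : ℕ) (x : Fin n → ℂ) : ℂ :=
  ∑ i : Fin k → Fin n, if StrictMono i then
    ∏ t : Fin k, (x (i t) + ((k : ℂ) - 1 - ((t : ℕ) : ℂ))) else 0

/-- The conjugate (transpose) partition (0-indexed). -/
noncomputable def conjP (n : ℕ) (μ : ℕ → ℕ) (j : ℕ) : ℕ :=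
  ((Finset.range n).filter (fun i => j + 1 ≤ μ i)).card

/-- If `μ₁ < k` then `e*_k(μ̃₁,…,μ̃ₙ) = 0`. -/
theorem stmt8 (n k : ℕ) (μ : ℕ → ℕ) (hμ : Antitone μ)
    (hvan : ∀ i, n ≤ i → μ i = 0) (hkn : k ≤ n)
    (hsmall : μ 0 < k) :
    estar n k (fun i => (conjP n μ (i : ℕ) : ℂ)) = 0 := by
  have hk : 1 ≤ k := Nat.pos_of_ne_zero (by rintro rfl; omega)
  unfold estar
  apply Finset.sum_eq_zero
  intro i _
  split_ifs with hi
  · set t₀ : Fin k := ⟨k - 1, by omega⟩ with ht₀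
    apply Finset.prod_eq_zero (Finset.mem_univ t₀)
    have key : ∀ m (h : m < k), m ≤ (i ⟨m, h⟩ : ℕ) := by
      intro m
      induction m with
      | zero => intro h; exact Nat.zero_le _
      | succ p ih =>
        intro h
        have hp : p < k := Nat.lt_of_succ_lt h
        have h1 : (i ⟨p, hp⟩ : ℕ) < (i ⟨p + 1, h⟩ : ℕ) :=
          hi (show (⟨p, hp⟩ : Fin k) < ⟨p + 1, h⟩ by simp [Fin.lt_def])
        have h2 := ih hp
        omega
    have hle : (t₀ : ℕ) ≤ (i t₀ : ℕ) := key _ _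
    have hconj : conjP n μ ((i t₀ : Fin n) : ℕ) = 0 := by
      unfold conjP
      rw [Finset.card_eq_zero, Finset.filter_eq_empty_iff]
      intro j hj
      have h1 : μ j ≤ μ 0 := hμ (Nat.zero_le j)
      have hle' : k - 1 ≤ (i t₀ : ℕ) := by simpa [ht₀] using hle
      omega
    beta_reduce
    rw [hconj]
    push_cast
    have : ((t₀ : ℕ) : ℂ) = (k : ℂ) - 1 := by
      simp only [ht₀]
      push_cast [Nat.cast_sub hk]
      ring
    rw [this]; ring
  · rfl
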